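/- There exist a constant C > 0 and p₀ > 1 such that for all real p ≥ p₀, writing b_p = 2 log p + 2 d₀ log log p, one has b_p / (p · G_h(b_p)) ≤ C (log p)^{2 + d₀ − h/2}. Consequently, if 2 d₀ < h − 4, then (log log p) · b_p / (p · G_h(b_p)) → 0 as p → ∞. -/

import Mathlib

open MeasureTheory ProbabilityTheory Real Filter

/-- `G_h(t) = P(χ²_h ≥ t)`, the survival function of the chi-square distribution with `h`
degrees of freedom, i.e. of the Gamma distribution with shape `h/2` and rate `1/2`. -/
noncomputable def chiSqTail (h : ℕ) (t : ℝ) : ℝ :=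
  (ProbabilityTheory.gammaMeasure ((h : ℝ) / 2) (1 / 2) (Set.Ici t)).toReal

/-- With `b_p = 2 log p + 2 d₀ log log p`, one has
`b_p / (p G_h(b_p)) ≤ C (log p)^{2 + d₀ − h/2}` for all large `p`; consequently, if
`2 d₀ < h − 4`, then `(log log p) ⬝ b_p / (p G_h(b_p)) → 0` as `p → ∞`. -/
lemma tail_lb (h : ℕ) (hh : 2 ≤ h) : ∃ c > (0:ℝ), ∀ t : ℝ, 1 ≤ t →
    c * t ^ ((h:ℝ)/2 - 1) * Real.exp (-t/2) ≤ chiSqTail h t := by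
  set a : ℝ := (h:ℝ)/2 with ha_def
  have ha1 : 1 ≤ a := by
    have : (2:ℝ) ≤ (h:ℝ) := by exact_mod_cast hh
    simp only [ha_def]; linarith
  have ha0 : 0 < a := by linarith
  have hG : 0 < Real.Gamma a := Real.Gamma_pos_of_pos ha0
  refine ⟨(1/2:ℝ) ^ a / Real.Gamma a * Real.exp (-(1/2)), by positivity, fun t ht ↦ ?_⟩
  have ht0 : (0:ℝ) < t := by linarith
  have := isProbabilityMeasure_gammaMeasure ha0 (by norm_num : (0:ℝ) < 1/2)
  have hmeas : gammaMeasure a (1/2) (Set.Ici t)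
      = ∫⁻ x in Set.Ici t, gammaPDF a (1/2) x := by
    rw [gammaMeasure, withDensity_apply _ measurableSet_Ici]
  have hne : gammaMeasure a (1/2) (Set.Ici t) ≠ ⊤ := measure_ne_top _ _
  rw [chiSqTail, ← ENNReal.ofReal_le_iff_le_toReal hne, hmeas]
  set M : ℝ := (1/2:ℝ) ^ a / Real.Gamma a * Real.exp (-(1/2)) * t ^ (a - 1) * Real.exp (-t/2)
  calc ENNReal.ofReal M = ENNReal.ofReal M * volume (Set.Icc t (t+1)) := by
        rw [Real.volume_Icc]; norm_num
    _ = ∫⁻ _ in Set.Icc t (t+1), ENNReal.ofReal M := (setLIntegral_const _ _).symm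
    _ ≤ ∫⁻ x in Set.Icc t (t+1), gammaPDF a (1/2) x := by
        refine setLIntegral_mono (measurable_gammaPDFReal a (1/2)).ennreal_ofReal
          fun x hx ↦ ?_
        rw [gammaPDF_of_nonneg (by linarith [hx.1] : (0:ℝ) ≤ x)]
        refine ENNReal.ofReal_le_ofReal ?_
        have hx1 : t ≤ x := hx.1
        have hx2 : x ≤ t + 1 := hx.2
        have h1 : t ^ (a-1) ≤ x ^ (a-1) :=
          Real.rpow_le_rpow ht0.le hx1 (by linarith)
        have h2 : Real.exp (-(1/2 * x)) ≥ Real.exp (-(1/2)) * Real.exp (-t/2) := by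
          rw [← Real.exp_add]
          exact Real.exp_le_exp.2 (by linarith)
        have ht' : (0:ℝ) ≤ t ^ (a-1) := Real.rpow_nonneg ht0.le _
        have hc' : (0:ℝ) ≤ (1/2:ℝ) ^ a / Real.Gamma a := by positivity
        have h2' : Real.exp (-(1/2)) * Real.exp (-t/2) ≤ Real.exp (-(1/2 * x)) := h2
        calc M = (1/2:ℝ) ^ a / Real.Gamma a * t ^ (a-1)
                  * (Real.exp (-(1/2)) * Real.exp (-t/2)) := by simp only [M]; ring
          _ ≤ (1/2:ℝ) ^ a / Real.Gamma a * x ^ (a-1) * Real.exp (-(1/2 * x)) :=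
              mul_le_mul (mul_le_mul_of_nonneg_left h1 hc') h2' (by positivity)
                (mul_nonneg hc' (Real.rpow_nonneg (by linarith) _))
    _ ≤ ∫⁻ x in Set.Ici t, gammaPDF a (1/2) x :=
        lintegral_mono_set (Set.Icc_subset_Ici_self)

lemma core (h : ℕ) (hh : 2 ≤ h) (d₀ : ℝ) : ∃ C > (0:ℝ), ∃ p₀ > (1:ℝ), ∀ p : ℝ, p₀ ≤ p →
    1 ≤ Real.log p ∧
    0 < 2 * Real.log p + 2 * d₀ * Real.log (Real.log p) ∧
    0 < p * chiSqTail h (2 * Real.log p + 2 * d₀ * Real.log (Real.log p)) ∧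
    (2 * Real.log p + 2 * d₀ * Real.log (Real.log p)) /
        (p * chiSqTail h (2 * Real.log p + 2 * d₀ * Real.log (Real.log p))) ≤
      C * Real.log p ^ (2 + d₀ - (h : ℝ) / 2) := by
  obtain ⟨c, hc, htail⟩ := tail_lb h hh
  set a : ℝ := (h:ℝ)/2 with ha_def
  set M : ℝ := max ((3:ℝ) ^ (2 - a)) 1 with hM_def
  have hM1 : (1:ℝ) ≤ M := le_max_right _ _
  have hM0 : (0:ℝ) < M := lt_of_lt_of_le one_pos hM1
  -- eventually |2 d₀| * log L ≤ L
  have hev : ∀ᶠ L in atTop, |2*d₀| * Real.log L ≤ L := by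
    have hb := Real.isLittleO_log_id_atTop.bound
      (show (0:ℝ) < 1/(|2*d₀|+1) by positivity)
    filter_upwards [hb, eventually_ge_atTop (1:ℝ)] with L hbL h1L
    have h0 : (0:ℝ) ≤ Real.log L := Real.log_nonneg h1L
    simp only [id_eq, Real.norm_eq_abs, abs_of_nonneg h0,
      abs_of_nonneg (show (0:ℝ) ≤ L by linarith)] at hbL
    have hpos : (0:ℝ) < |2*d₀| + 1 := by positivity
    have := mul_le_mul_of_nonneg_left hbL hpos.le
    rw [← mul_assoc, mul_one_div, div_self hpos.ne', one_mul] at this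
    nlinarith [abs_nonneg (2*d₀)]
  obtain ⟨L₀, hL₀⟩ := eventually_atTop.mp hev
  refine ⟨M / c, by positivity, Real.exp (max L₀ 1), ?_, fun p hp ↦ ?_⟩
  · calc (1:ℝ) = Real.exp 0 := Real.exp_zero.symm
      _ < Real.exp (max L₀ 1) := Real.exp_lt_exp.2 (by positivity)
  set L : ℝ := Real.log p with hL_def
  have hp1 : (1:ℝ) < p := lt_of_lt_of_le (by
      calc (1:ℝ) = Real.exp 0 := Real.exp_zero.symm
        _ < Real.exp (max L₀ 1) := Real.exp_lt_exp.2 (by positivity)) hp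
  have hp0 : (0:ℝ) < p := by linarith
  have hLge : max L₀ 1 ≤ L := by
    rw [hL_def, ← Real.log_exp (max L₀ 1)]
    exact Real.log_le_log (Real.exp_pos _) hp
  have hL1 : (1:ℝ) ≤ L := le_trans (le_max_right _ _) hLge
  have hL0 : (0:ℝ) < L := by linarith
  have hlogL0 : (0:ℝ) ≤ Real.log L := Real.log_nonneg hL1
  have habs : |2*d₀| * Real.log L ≤ L := hL₀ L (le_trans (le_max_left _ _) hLge)
  set t : ℝ := 2 * L + 2 * d₀ * Real.log L with ht_def
  have habs2 : |2 * d₀ * Real.log L| ≤ L := by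
    rw [abs_mul, abs_of_nonneg hlogL0]; exact habs
  have htL : L ≤ t := by
    have := neg_abs_le (2 * d₀ * Real.log L)
    simp only [ht_def]; linarith
  have ht3L : t ≤ 3 * L := by
    have := le_abs_self (2 * d₀ * Real.log L)
    simp only [ht_def]; linarith
  have ht1 : (1:ℝ) ≤ t := le_trans hL1 htL
  have ht0 : (0:ℝ) < t := by linarith
  -- exp identity
  have hexp : Real.exp (-t/2) = L ^ (-d₀) / p := by
    have h1 : -t/2 = -L + -d₀ * Real.log L := by simp only [ht_def]; ring
    have h2 : L ^ (-d₀) = Real.exp (-d₀ * Real.log L) := by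
      rw [Real.rpow_def_of_pos hL0, mul_comm]
    rw [h1, Real.exp_add, Real.exp_neg, Real.exp_log hp0, h2, div_eq_mul_inv, mul_comm]
  -- lower bound on p * G
  have hG := htail t ht1
  set T : ℝ := t ^ (a - 1) with hT_def
  set D : ℝ := L ^ d₀ with hD_def
  have hT0 : (0:ℝ) < T := Real.rpow_pos_of_pos ht0 _
  have hD0 : (0:ℝ) < D := Real.rpow_pos_of_pos hL0 _
  have hDneg : L ^ (-d₀) = D⁻¹ := by rw [hD_def, Real.rpow_neg hL0.le]
  have hpG : c * T * D⁻¹ ≤ p * chiSqTail h t := by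
    have h1 : p * (c * T * Real.exp (-t/2)) ≤ p * chiSqTail h t :=
      mul_le_mul_of_nonneg_left hG hp0.le
    calc c * T * D⁻¹ = p * (c * T * (D⁻¹ / p)) := by field_simp
      _ = p * (c * T * Real.exp (-t/2)) := by rw [hexp, hDneg]
      _ ≤ p * chiSqTail h t := h1
  have hpG0 : (0:ℝ) < p * chiSqTail h t := lt_of_lt_of_le (by positivity) hpG
  refine ⟨hL1, ht0, hpG0, ?_⟩
  -- key exponent bound : t^(2-a) ≤ M * L^(2-a)
  set S : ℝ := t ^ (2 - a) with hS_def
  set E : ℝ := L ^ (2 - a) with hE_def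
  have hE0 : (0:ℝ) < E := Real.rpow_pos_of_pos hL0 _
  have hSE : S ≤ M * E := by
    rcases le_or_gt 0 (2 - a) with hca | hca
    · have h1 : S ≤ (3*L) ^ (2 - a) :=
        Real.rpow_le_rpow ht0.le ht3L hca
      have h2 : (3*L) ^ (2 - a) = (3:ℝ)^(2-a) * E := by
        rw [hE_def, Real.mul_rpow (by norm_num) hL0.le]
      calc S ≤ (3:ℝ)^(2-a) * E := by rw [← h2]; exact h1
        _ ≤ M * E := mul_le_mul_of_nonneg_right (le_max_left _ _) hE0.le
    · have h1 : S ≤ E := Real.rpow_le_rpow_of_nonpos hL0 htL hca.le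
      calc S ≤ E := h1
        _ = 1 * E := (one_mul E).symm
        _ ≤ M * E := mul_le_mul_of_nonneg_right hM1 hE0.le
  -- t = S * T
  have htST : t = S * T := by
    rw [hS_def, hT_def, ← Real.rpow_add ht0]
    norm_num
  -- L^(2+d₀-a) = E * D
  have hLED : L ^ (2 + d₀ - a) = E * D := by
    rw [hE_def, hD_def, ← Real.rpow_add hL0]
    ring_nf
  calc t / (p * chiSqTail h t)
      ≤ t / (c * T * D⁻¹) := by
        apply div_le_div_of_nonneg_left ht0.le (by positivity) hpG
    _ = S * D / c := by rw [htST]; field_simp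
    _ ≤ (M * E) * D / c := by
        apply div_le_div_of_nonneg_right ?_ hc.le
        exact mul_le_mul_of_nonneg_right hSE hD0.le
    _ = M / c * L ^ (2 + d₀ - a) := by rw [hLED]; field_simp

theorem statement4 (h : ℕ) (hh : 2 ≤ h) (d₀ : ℝ) :
    (∃ C > (0 : ℝ), ∃ p₀ > (1 : ℝ), ∀ p : ℝ, p₀ ≤ p →
      (2 * Real.log p + 2 * d₀ * Real.log (Real.log p)) /
          (p * chiSqTail h (2 * Real.log p + 2 * d₀ * Real.log (Real.log p))) ≤
        C * Real.log p ^ (2 + d₀ - (h : ℝ) / 2)) ∧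
    (2 * d₀ < (h : ℝ) - 4 →
      Tendsto (fun p : ℝ =>
          Real.log (Real.log p) * (2 * Real.log p + 2 * d₀ * Real.log (Real.log p)) /
            (p * chiSqTail h (2 * Real.log p + 2 * d₀ * Real.log (Real.log p))))
        atTop (nhds 0)) := by
  obtain ⟨C, hC, p₀, hp₀, hcore⟩ := core h hh d₀
  constructor
  · exact ⟨C, hC, p₀, hp₀, fun p hp ↦ (hcore p hp).2.2.2⟩
  · intro hd
    set e : ℝ := 2 + d₀ - (h:ℝ)/2 with he_def
    have he : e < 0 := by simp only [he_def]; linarith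
    -- the majorant tends to 0
    have hmaj : Tendsto (fun L : ℝ => C * (Real.log L * L ^ e)) atTop (nhds 0) := by
      have h1 : Tendsto (fun L : ℝ => Real.log L / L ^ (-e)) atTop (nhds 0) :=
        (isLittleO_log_rpow_atTop (by linarith : (0:ℝ) < -e)).tendsto_div_nhds_zero
      have h2 : Tendsto (fun L : ℝ => Real.log L * L ^ e) atTop (nhds 0) := by
        refine h1.congr' ?_
        filter_upwards [eventually_gt_atTop (0:ℝ)] with L hL
        rw [Real.rpow_neg hL.le, div_eq_mul_inv, inv_inv]
      simpa using h2.const_mul C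
    have hmaj' : Tendsto (fun p : ℝ => C * (Real.log (Real.log p) * Real.log p ^ e))
        atTop (nhds 0) := hmaj.comp Real.tendsto_log_atTop
    refine squeeze_zero' ?_ ?_ hmaj'
    · filter_upwards [eventually_ge_atTop p₀] with p hp
      obtain ⟨hL1, ht0, hpG0, _⟩ := hcore p hp
      have : (0:ℝ) ≤ Real.log (Real.log p) := Real.log_nonneg hL1
      positivity
    · filter_upwards [eventually_ge_atTop p₀] with p hp
      obtain ⟨hL1, ht0, hpG0, hbd⟩ := hcore p hp
      have hll : (0:ℝ) ≤ Real.log (Real.log p) := Real.log_nonneg hL1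
      rw [mul_div_assoc]
      calc Real.log (Real.log p) *
            ((2 * Real.log p + 2 * d₀ * Real.log (Real.log p)) /
              (p * chiSqTail h (2 * Real.log p + 2 * d₀ * Real.log (Real.log p))))
          ≤ Real.log (Real.log p) * (C * Real.log p ^ e) :=
            mul_le_mul_of_nonneg_left hbd hll
        _ = C * (Real.log (Real.log p) * Real.log p ^ e) := by ring
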